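/- arXiv:2408.14661 — 2 statements merged into one kernel-verified Lean document; each statement's English description precedes it below -/
import Mathlib

section
/- The queue-jumping observation model with error probability p = 0 reduces to the uniform distribution on linear extensions: for every partial order h on a finite set V of size n and every linear extension l = (l_1, …, l_n) ∈ L[h], ∏_{i=1}^{n-1} L_{l_i}(h[{l_i, l_{i+1}, …, l_n}]) / L(h[{l_i, l_{i+1}, …, l_n}]) = 1 / |L[h]|, where L(g) = |L[g]| and L_k(g) is the number of linear extensions of g whose first element is k. -/
/-- A (strict) partial order on `V`: an irreflexive transitive binary relation. -/
def IsPartialOrderOn {V : Type*} (r : V → V → Prop) : Prop :=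
  (∀ a, ¬ r a a) ∧ (∀ a b c, r a b → r b c → r a c)

/-- `l` is a linear extension of the suborder `h[o]` of the partial order `r`:
it enumerates `o` without repetition and for `a < b` it is not the case
that `l_b ≻ l_a`. -/
def IsLinextOn {V : Type*} (r : V → V → Prop) (o : Set V) (l : List V) : Prop :=
  l.Nodup ∧ (∀ v : V, v ∈ l ↔ v ∈ o) ∧
    ∀ a b : Fin l.length, a < b → ¬ r (l.get b) (l.get a)

lemma linext_iff {V : Type*} (r : V → V → Prop) (o : Set V) (m : List V) :
    IsLinextOn r o m ↔
      m.Nodup ∧ (∀ v, v ∈ m ↔ v ∈ o) ∧ m.Pairwise (fun a b => ¬ r b a) := by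
  unfold IsLinextOn
  rw [List.pairwise_iff_get]

lemma linext_finite {V : Type*} [Fintype V] (r : V → V → Prop) (o : Set V) :
    {m : List V | IsLinextOn r o m}.Finite := by
  apply (List.finite_length_le V (Fintype.card V)).subset
  intro m hm
  exact hm.1.length_le_card

lemma linext_singleton {V : Type*} (r : V → V → Prop) (x : V) :
    {m : List V | IsLinextOn r {v | v ∈ [x]} m} = {[x]} := by
  ext m
  simp only [Set.mem_setOf_eq, linext_iff, Set.mem_singleton_iff]
  constructor
  · rintro ⟨h1, h2, _⟩
    have hx : x ∈ m := (h2 x).2 (by simp)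
    match m, h1, h2, hx with
    | [a], _, h2, hx => simp_all
    | a :: b :: t, h1, h2, hx =>
      have ha : a ∈ {v | v ∈ [x]} := (h2 a).1 (by simp)
      have hb : b ∈ {v | v ∈ [x]} := (h2 b).1 (by simp)
      simp only [Set.mem_setOf_eq, List.mem_singleton] at ha hb
      subst ha; subst hb
      simp at h1
  · rintro rfl
    refine ⟨List.nodup_singleton x, fun v => by simp, by simp⟩

lemma linext_cons {V : Type*} (r : V → V → Prop) (x : V) (d : List V)
    (hx : x ∉ d) (hd : ∀ v ∈ d, ¬ r v x) :
    {m : List V | IsLinextOn r {v | v ∈ x :: d} m ∧ m.head? = some x}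
      = (fun m => x :: m) '' {m : List V | IsLinextOn r {v | v ∈ d} m} := by
  ext m
  simp only [Set.mem_setOf_eq, Set.mem_image, linext_iff]
  constructor
  · rintro ⟨⟨h1, h2, h3⟩, hh⟩
    match m, hh with
    | a :: t, hh =>
      simp only [List.head?_cons, Option.some.injEq] at hh
      subst hh
      rw [List.nodup_cons] at h1
      rw [List.pairwise_cons] at h3
      refine ⟨t, ⟨h1.2, fun v => ?_, h3.2⟩, rfl⟩
      constructor
      · intro hv
        have := (h2 v).1 (by simp [hv])
        simp only [Set.mem_setOf_eq, List.mem_cons] at this ⊢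
        rcases this with rfl | h
        · exact absurd hv h1.1
        · exact h
      · intro hv
        have := (h2 v).2 (by simp [hv])
        simp only [List.mem_cons] at this
        rcases this with rfl | h
        · exact absurd hv hx
        · exact h
  · rintro ⟨t, ⟨h1, h2, h3⟩, rfl⟩
    have hxt : x ∉ t := fun h => hx ((h2 x).1 h)
    refine ⟨⟨List.nodup_cons.2 ⟨hxt, h1⟩, fun v => ?_, ?_⟩, rfl⟩
    · simp only [List.mem_cons, Set.mem_setOf_eq]
      constructor
      · rintro (rfl | h)
        · exact Or.inl rfl
        · exact Or.inr ((h2 v).1 h)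
      · rintro (rfl | h)
        · exact Or.inl rfl
        · exact Or.inr ((h2 v).2 h)
    · rw [List.pairwise_cons]
      exact ⟨fun v hv => hd v ((h2 v).1 hv), h3⟩

/- **Statement 6.** The queue-jumping model with error probability `p = 0` reduces to the
uniform distribution on linear extensions: for every linear extension
`l = (l_1,…,l_n) ∈ L[h]`,
`∏_{i=1}^{n-1} L_{l_i}(h[{l_i,…,l_n}]) / L(h[{l_i,…,l_n}]) = 1/|L[h]|`.
Here `{l_i,…,l_n}` is the set of entries of `l.drop i` (0-indexed `i`), whose first
element is `l_i`; `L_k(g)` counts the linear extensions of `g` headed by `k`. -/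
theorem queueJump_noise_free {V : Type*} [Fintype V] (n : ℕ)
    (hcard : Fintype.card V = n)
    (r : V → V → Prop) (hr : IsPartialOrderOn r)
    (l : List V) (hl : IsLinextOn r Set.univ l) :
    (∏ i ∈ Finset.range (l.length - 1),
        (({m : List V | IsLinextOn r {v : V | v ∈ l.drop i} m ∧
            m.head? = (l.drop i).head?}.ncard : ℝ) /
          ({m : List V | IsLinextOn r {v : V | v ∈ l.drop i} m}.ncard : ℝ)))
      = 1 / ({m : List V | IsLinextOn r Set.univ m}.ncard : ℝ) := by
  rw [linext_iff] at hl
  obtain ⟨hnd, hmem, hpw⟩ := hl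
  -- f i : number of linear extensions of the suffix starting at i
  set f : ℕ → ℝ := fun i => ({m : List V | IsLinextOn r {v : V | v ∈ l.drop i} m}.ncard : ℝ)
    with hf
  -- each suffix is itself a linear extension of its own set, so f i ≠ 0
  have hmemf : ∀ i, l.drop i ∈ {m : List V | IsLinextOn r {v : V | v ∈ l.drop i} m} := by
    intro i
    rw [Set.mem_setOf_eq, linext_iff]
    exact ⟨hnd.sublist (List.drop_sublist i l), fun v => Iff.rfl,
      hpw.sublist (List.drop_sublist i l)⟩
  have hfin : ∀ i, {m : List V | IsLinextOn r {v : V | v ∈ l.drop i} m}.Finite :=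
    fun i => linext_finite r _
  have hfpos : ∀ i, 0 < f i := by
    intro i
    have h : 0 < {m : List V | IsLinextOn r {v : V | v ∈ l.drop i} m}.ncard :=
      Set.Nonempty.ncard_pos (hfin i) ⟨_, hmemf i⟩
    simp only [hf]
    exact_mod_cast h
  -- the numerator at step i equals f (i+1)
  have hnum : ∀ i < l.length - 1,
      ({m : List V | IsLinextOn r {v : V | v ∈ l.drop i} m ∧
        m.head? = (l.drop i).head?}.ncard : ℝ) = f (i + 1) := by
    intro i hi
    have hi' : i < l.length := lt_of_lt_of_le hi (Nat.sub_le _ _)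
    have hdrop : l.drop i = l[i] :: l.drop (i + 1) := List.drop_eq_getElem_cons hi'
    have hsubl : List.Sublist (l[i] :: l.drop (i + 1)) l := by
      rw [← hdrop]; exact List.drop_sublist i l
    have hxnotin : l[i] ∉ l.drop (i + 1) := by
      have : (l[i] :: l.drop (i + 1)).Nodup := hnd.sublist hsubl
      exact (List.nodup_cons.1 this).1
    have hrel : ∀ v ∈ l.drop (i + 1), ¬ r v l[i] := by
      have : (l[i] :: l.drop (i + 1)).Pairwise (fun a b => ¬ r b a) := hpw.sublist hsubl
      exact (List.pairwise_cons.1 this).1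
    rw [hdrop]
    simp only [List.head?_cons]
    rw [linext_cons r l[i] (l.drop (i + 1)) hxnotin hrel,
      Set.ncard_image_of_injective _ (fun a b h => by injection h)]
  -- telescoping
  have key : ∀ k ≤ l.length - 1,
      (∏ i ∈ Finset.range k,
        (({m : List V | IsLinextOn r {v : V | v ∈ l.drop i} m ∧
            m.head? = (l.drop i).head?}.ncard : ℝ) /
          ({m : List V | IsLinextOn r {v : V | v ∈ l.drop i} m}.ncard : ℝ)))
        = f k / f 0 := by
    intro k hk
    induction k with
    | zero => simp [div_self (hfpos 0).ne']
    | succ k ih =>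
      rw [Finset.prod_range_succ, ih (le_trans (Nat.le_succ k) hk),
        hnum k (lt_of_lt_of_le (Nat.lt_succ_self k) hk)]
      have hden : ({m : List V | IsLinextOn r {v : V | v ∈ l.drop k} m}.ncard : ℝ) = f k := rfl
      rw [hden]
      have h1 := (hfpos 0).ne'
      have h2 := (hfpos k).ne'
      field_simp
  rw [key (l.length - 1) le_rfl]
  -- f 0 is the total count
  have hf0 : f 0 = ({m : List V | IsLinextOn r Set.univ m}.ncard : ℝ) := by
    have : {v : V | v ∈ l.drop 0} = Set.univ := by
      ext v; simpa using hmem v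
    simp only [hf, List.drop_zero] at *
    rw [show {v : V | v ∈ l} = Set.univ from this]
  rw [hf0]
  rcases Nat.eq_zero_or_pos l.length with h0 | hpos
  · -- l is empty, so V is empty and the unique linear extension is []
    have hle : l = [] := List.length_eq_zero_iff.1 h0
    subst hle
    have hV : IsEmpty V := ⟨fun v => by simpa using (hmem v).2 trivial⟩
    have : {m : List V | IsLinextOn r Set.univ m} = {[]} := by
      ext m
      simp only [Set.mem_setOf_eq, Set.mem_singleton_iff]
      constructor
      · intro hm
        match m with
        | [] => rfl
        | a :: t => exact (hV.false a).elim
      · rintro rfl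
        exact ⟨List.nodup_nil, fun v => (hV.false v).elim, fun a _ => a.elim0⟩
    rw [show ([] : List V).length - 1 = 0 from rfl, hf0, this]
    simp
  · -- f (len - 1) = 1 since the last suffix is a singleton
    have hlast : l.length - 1 < l.length := Nat.sub_lt hpos one_pos
    have hdrop : l.drop (l.length - 1) = [l[l.length - 1]] := by
      have := List.drop_eq_getElem_cons hlast
      rw [this]
      congr 1
      rw [Nat.sub_add_cancel hpos, List.drop_length]
    have : f (l.length - 1) = 1 := by
      simp only [hf, hdrop, linext_singleton r]
      simp
    rw [this]
end

section
/- (Consistency of the intersection order.) Let h† be a partial order on a finite set V and let (Y_j)_{j≥1} be independent random lists, each uniformly distributed on L[h†]. For N ≥ 1 let h^int_N be the intersection order of Y_1, …, Y_N. Then almost surely h^int_N = h† for all sufficiently large N; in particular P(h^int_N = h†) → 1 as N → ∞, so the intersection order converges in probability to the true partial order as the number of sampled linear extensions goes to infinity. -/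
open MeasureTheory ProbabilityTheory Filter

/-- `l` is a linear extension of the partial order `r`: it enumerates `V` without
repetition and for `a < b` it is not the case that `l_b ≻ l_a`. -/
def IsLinext {V : Type*} (r : V → V → Prop) (l : List V) : Prop :=
  l.Nodup ∧ (∀ v : V, v ∈ l) ∧
    ∀ a b : Fin l.length, a < b → ¬ r (l.get b) (l.get a)

/-- `i` appears (strictly) before `j` in the list `l`. -/
def Before {V : Type*} [DecidableEq V] (l : List V) (i j : V) : Prop :=
  l.idxOf i < l.idxOf j

theorem exists_linext {V : Type*} [Fintype V] (r : V → V → Prop)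
    (hpo : IsPartialOrderOn r) : ∃ l : List V, IsLinext r l := by
  classical
  obtain ⟨hirr, htrans⟩ := hpo
  let r' : V → V → Prop := fun a b => r a b ∨ a = b
  haveI : IsPartialOrder V r' :=
    { refl := fun a => Or.inr rfl
      trans := by
        rintro a b c (hab | rfl) (hbc | rfl)
        · exact Or.inl (htrans _ _ _ hab hbc)
        · exact Or.inl hab
        · exact Or.inl hbc
        · exact Or.inr rfl
      antisymm := by
        rintro a b (hab | rfl) (hba | h)
        · exact absurd (htrans _ _ _ hab hba) (hirr a)
        · exact h.symm
        · rfl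
        · rfl }
  obtain ⟨s, hlin, hrs⟩ := extend_partialOrder r'
  haveI : IsLinearOrder V s := hlin
  haveI : DecidableRel s := Classical.decRel s
  refine ⟨Finset.univ.sort s, Finset.sort_nodup _ s, fun v => (Finset.mem_sort s).2 (Finset.mem_univ v), ?_⟩
  intro a b hab hr
  have hsorted := Finset.pairwise_sort (Finset.univ : Finset V) s
  have h1 : s ((Finset.univ.sort s).get a) ((Finset.univ.sort s).get b) :=
    hsorted.rel_get_of_lt hab
  have h2 : s ((Finset.univ.sort s).get b) ((Finset.univ.sort s).get a) :=
    hrs _ _ (Or.inl hr)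
  have heq : (Finset.univ.sort s).get a = (Finset.univ.sort s).get b :=
    antisymm h1 h2
  have := ((Finset.sort_nodup (Finset.univ : Finset V) s).get_inj_iff).1 heq
  exact absurd this hab.ne

theorem before_of_linext {V : Type*} [DecidableEq V] {r : V → V → Prop}
    (hirr : ∀ a, ¬ r a a) {l : List V} (hl : IsLinext r l) {i j : V} (hr : r i j) :
    Before l i j := by
  obtain ⟨hnd, hmem, hord⟩ := hl
  have hi : l.idxOf i < l.length := List.idxOf_lt_length_iff.2 (hmem i)
  have hj : l.idxOf j < l.length := List.idxOf_lt_length_iff.2 (hmem j)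
  have hgi : l.get ⟨_, hi⟩ = i := List.idxOf_get hi
  have hgj : l.get ⟨_, hj⟩ = j := List.idxOf_get hj
  rcases lt_trichotomy (l.idxOf i) (l.idxOf j) with h | h | h
  · exact h
  · exfalso
    have : i = j := by rw [← hgi, ← hgj]; exact congrArg l.get (Fin.ext h)
    exact hirr i (this ▸ hr)
  · exfalso
    have := hord ⟨_, hj⟩ ⟨_, hi⟩ h
    rw [hgi, hgj] at this
    exact this hr

theorem exists_linext_before {V : Type*} [Fintype V] [DecidableEq V]
    (r : V → V → Prop) (hpo : IsPartialOrderOn r) {i j : V} (hij : i ≠ j)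
    (hnr : ¬ r i j) : ∃ l : List V, IsLinext r l ∧ Before l j i := by
  obtain ⟨hirr, htrans⟩ := hpo
  set q : V → V → Prop := fun a b => r a b ∨ ((a = j ∨ r a j) ∧ (b = i ∨ r i b)) with hq
  have hqpo : IsPartialOrderOn q := by
    constructor
    · rintro a (h | ⟨h1 | h1, h2 | h2⟩)
      · exact hirr a h
      · exact hij (h2.symm.trans h1)
      · exact hnr (h1 ▸ h2)
      · exact hnr (h2 ▸ h1)
      · exact hnr (htrans _ _ _ h2 h1)
    · rintro a b c (hab | ⟨h1, h2⟩) (hbc | ⟨h3, h4⟩)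
      · exact Or.inl (htrans _ _ _ hab hbc)
      · refine Or.inr ⟨?_, h4⟩
        rcases h3 with rfl | h3
        · exact Or.inr hab
        · exact Or.inr (htrans _ _ _ hab h3)
      · refine Or.inr ⟨h1, ?_⟩
        rcases h2 with rfl | h2
        · exact Or.inr hbc
        · exact Or.inr (htrans _ _ _ h2 hbc)
      · exfalso
        rcases h2 with rfl | h2 <;> rcases h3 with h3 | h3
        · exact hij h3
        · exact hnr h3
        · exact hnr (h3 ▸ h2)
        · exact hnr (htrans _ _ _ h2 h3)
  obtain ⟨l, hl⟩ := exists_linext q hqpo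
  refine ⟨l, ⟨hl.1, hl.2.1, fun a b hab hr => hl.2.2 a b hab (Or.inl hr)⟩, ?_⟩
  exact before_of_linext hqpo.1 hl (Or.inr ⟨Or.inl rfl, Or.inl rfl⟩)

/- **Statement 17.** Consistency of the intersection order: if `(Y_j)` are i.i.d.
uniform on `L[h†]`, then almost surely the intersection order of `Y_1,…,Y_N` equals
`h†` for all sufficiently large `N`; in particular `P(h^int_N = h†) → 1`. -/
open Classical in
theorem intersection_order_consistent {V : Type*} [Fintype V] [DecidableEq V]
    (rtrue : V → V → Prop) (hpo : IsPartialOrderOn rtrue)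
    {Ω : Type*} [MeasurableSpace Ω] (μ : Measure Ω) [IsProbabilityMeasure μ]
    [MeasurableSpace (List V)] [MeasurableSingletonClass (List V)]
    (Y : ℕ → Ω → List V) (hmeas : ∀ j, Measurable (Y j))
    (hindep : iIndepFun (m := fun _ => ‹MeasurableSpace (List V)›) Y μ)
    (hdist : ∀ j, Measure.map (Y j) μ = uniformOn {l : List V | IsLinext rtrue l}) :
    (∀ᵐ ω ∂μ, ∃ N₀ : ℕ, ∀ N ≥ N₀,
        (fun i j : V => ∀ t < N, Before (Y t ω) i j) = rtrue) ∧
    Tendsto (fun N : ℕ =>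
        μ {ω | (fun i j : V => ∀ t < N, Before (Y t ω) i j) = rtrue})
      atTop (nhds 1) := by
  classical
  have hirr := hpo.1
  have htrans := hpo.2
  set S : Set (List V) := {l : List V | IsLinext rtrue l} with hSdef
  have hSfin : S.Finite :=
    (List.finite_length_le V (Fintype.card V)).subset fun l hl => hl.1.length_le_card
  have hSne : S.Nonempty := exists_linext rtrue hpo
  have hAllMeas : ∀ A : Set (List V), MeasurableSet A := fun A =>
    (Set.to_countable A).measurableSet
  haveI : IsProbabilityMeasure (uniformOn S) := uniformOn_isProbabilityMeasure hSfin hSne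
  -- each Y t lands in S a.s.
  have hYS : ∀ᵐ ω ∂μ, ∀ t, Y t ω ∈ S := by
    rw [ae_all_iff]
    intro t
    rw [ae_iff]
    have h1 : {a | ¬ Y t a ∈ S} = Y t ⁻¹' Sᶜ := rfl
    rw [h1, ← Measure.map_apply (hmeas t) (hAllMeas _), hdist t]
    rw [prob_compl_eq_zero_iff (hAllMeas S)]
    exact uniformOn_self hSfin hSne
  -- key zero lemma
  have hkey : ∀ l0 ∈ S, μ {ω | ∀ t, Y t ω ≠ l0} = 0 := by
    intro l0 hl0
    set p : ENNReal := uniformOn S {l0} with hpdef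
    have hp0 : p ≠ 0 := by
      rw [hpdef, Ne, uniformOn_eq_zero_iff hSfin]
      intro h
      exact absurd h (Set.nonempty_iff_ne_empty.1 ⟨l0, hl0, rfl⟩)
    have hcompl : ∀ t : ℕ, μ (Y t ⁻¹' {l0}ᶜ) = 1 - p := by
      intro t
      rw [← Measure.map_apply (hmeas t) (hAllMeas _), hdist t,
        measure_compl (hAllMeas _) (measure_ne_top _ _), measure_univ]
    have hle : ∀ N : ℕ, μ {ω | ∀ t, Y t ω ≠ l0} ≤ (1 - p) ^ N := by
      intro N
      have hBN := hindep.measure_inter_preimage_eq_mul (Finset.range N)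
        (sets := fun _ => ({l0}ᶜ : Set (List V))) (fun i _ => hAllMeas _)
      calc μ {ω | ∀ t, Y t ω ≠ l0}
          ≤ μ (⋂ t ∈ Finset.range N, Y t ⁻¹' ({l0}ᶜ : Set (List V))) :=
            measure_mono fun ω hω => Set.mem_iInter₂.2 fun t _ => hω t
        _ = ∏ t ∈ Finset.range N, μ (Y t ⁻¹' ({l0}ᶜ : Set (List V))) := hBN
        _ = (1 - p) ^ N := by
            rw [Finset.prod_congr rfl fun t _ => hcompl t, Finset.prod_const, Finset.card_range]
    have hlt1 : 1 - p < 1 := ENNReal.sub_lt_self ENNReal.one_ne_top one_ne_zero hp0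
    have htd := ENNReal.tendsto_pow_atTop_nhds_zero_of_lt_one hlt1
    exact le_antisymm (le_of_tendsto_of_tendsto' tendsto_const_nhds htd hle) zero_le
  -- witnesses for incomparable pairs
  have hC : ∀ i j : V, i ≠ j → ¬ rtrue i j →
      ∃ l : List V, IsLinext rtrue l ∧ Before l j i :=
    fun i j hij hnr => exists_linext_before rtrue hpo hij hnr
  set L : V → V → List V := fun i j =>
    if h : i ≠ j ∧ ¬ rtrue i j then (hC i j h.1 h.2).choose else [] with hLdef
  have hL : ∀ i j : V, i ≠ j → ¬ rtrue i j →
      IsLinext rtrue (L i j) ∧ Before (L i j) j i := by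
    intro i j h1 h2
    have : L i j = (hC i j h1 h2).choose := by
      rw [hLdef]; simp only [dif_pos (show i ≠ j ∧ ¬ rtrue i j from ⟨h1, h2⟩)]
    rw [this]
    exact (hC i j h1 h2).choose_spec
  have hhit : ∀ᵐ ω ∂μ, ∀ i j : V, i ≠ j → ¬ rtrue i j → ∃ t, Y t ω = L i j := by
    rw [ae_all_iff]
    intro i
    rw [ae_all_iff]
    intro j
    by_cases h : i ≠ j ∧ ¬ rtrue i j
    · have h0 := hkey (L i j) (hL i j h.1 h.2).1
      have h0' : ∀ᵐ ω ∂μ, ∃ t, Y t ω = L i j := by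
        rw [ae_iff]
        have : {a | ¬ ∃ t, Y t a = L i j} = {ω | ∀ t, Y t ω ≠ L i j} := by
          ext ω; simp [not_exists]
        rw [this]; exact h0
      filter_upwards [h0'] with ω hω
      exact fun _ _ => hω
    · exact ae_of_all _ fun ω h1 h2 => absurd ⟨h1, h2⟩ h
  -- main a.s. statement
  have hmain : ∀ᵐ ω ∂μ, ∃ N₀ : ℕ, ∀ N ≥ N₀,
      (fun i j : V => ∀ t < N, Before (Y t ω) i j) = rtrue := by
    filter_upwards [hYS, hhit] with ω hω1 hω2
    set T : V × V → ℕ := fun pr =>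
      if h : ∃ t, Y t ω = L pr.1 pr.2 then Nat.find h else 0 with hTdef
    refine ⟨Finset.univ.sup T + 1, fun N hN => ?_⟩
    funext i j
    apply propext
    constructor
    · intro H
      by_contra hnr
      by_cases hij : i = j
      · subst hij
        have h0 : (0 : ℕ) < N := lt_of_lt_of_le (Nat.succ_pos _) hN
        have := H 0 h0
        unfold Before at this
        exact lt_irrefl _ this
      · obtain ⟨t, ht⟩ := hω2 i j hij hnr
        have hfind : ∃ t, Y t ω = L i j := ⟨t, ht⟩
        have hTval : T (i, j) = Nat.find hfind := by
          rw [hTdef]; simp only [dif_pos hfind]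
        have htN : Nat.find hfind < N := by
          calc Nat.find hfind = T (i, j) := hTval.symm
            _ ≤ Finset.univ.sup T := Finset.le_sup (Finset.mem_univ _)
            _ < N := hN
        have hY := Nat.find_spec hfind
        have hb : Before (L i j) j i := (hL i j hij hnr).2
        have hb2 : Before (Y (Nat.find hfind) ω) i j := H _ htN
        rw [hY] at hb2
        unfold Before at hb hb2
        exact lt_irrefl _ (lt_trans hb2 hb)
    · intro hr t _
      exact before_of_linext hirr (hω1 t) hr
  refine ⟨hmain, ?_⟩
  -- convergence in probability
  set E : ℕ → Set Ω := fun N =>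
    {ω | (fun i j : V => ∀ t < N, Before (Y t ω) i j) = rtrue} with hEdef
  have hEmeas : ∀ N, MeasurableSet (E N) := by
    intro N
    have hrw : E N = ⋂ (i : V) (j : V),
        {ω | (∀ t < N, Before (Y t ω) i j) ↔ rtrue i j} := by
      ext ω
      simp only [hEdef, Set.mem_setOf_eq, Set.mem_iInter, funext_iff, eq_iff_iff]
    rw [hrw]
    refine MeasurableSet.iInter fun i => MeasurableSet.iInter fun j => ?_
    have hbase : MeasurableSet {ω | ∀ t < N, Before (Y t ω) i j} := by
      have : {ω | ∀ t < N, Before (Y t ω) i j} =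
          ⋂ (t : ℕ) (_ : t < N), Y t ⁻¹' {l | Before l i j} := by
        ext ω; simp [Set.mem_iInter]
      rw [this]
      exact MeasurableSet.iInter fun t => MeasurableSet.iInter fun _ =>
        (hmeas t) (hAllMeas _)
    by_cases hr : rtrue i j
    · have : {ω | (∀ t < N, Before (Y t ω) i j) ↔ rtrue i j} =
          {ω | ∀ t < N, Before (Y t ω) i j} := by
        ext ω; simp [hr]
      rw [this]; exact hbase
    · have : {ω | (∀ t < N, Before (Y t ω) i j) ↔ rtrue i j} =
          {ω | ∀ t < N, Before (Y t ω) i j}ᶜ := by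
        ext ω; simp [hr]
      rw [this]; exact hbase.compl
  set F : ℕ → Set Ω := fun N => ⋂ (k : ℕ) (_ : N ≤ k), E k with hFdef
  have hFmeas : ∀ N, MeasurableSet (F N) := fun N =>
    MeasurableSet.iInter fun k => MeasurableSet.iInter fun _ => hEmeas k
  have hFmono : Monotone F := fun M N hMN =>
    Set.iInter₂_mono' fun k hk => ⟨k, le_trans hMN hk, subset_rfl⟩
  have hFE : ∀ N, F N ⊆ E N := fun N => Set.iInter₂_subset N (le_refl N)
  have hsubU : ∀ᵐ ω ∂μ, ω ∈ ⋃ N, F N := by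
    filter_upwards [hmain] with ω hω
    obtain ⟨N₀, hN₀⟩ := hω
    exact Set.mem_iUnion.2 ⟨N₀, Set.mem_iInter₂.2 fun k hk => hN₀ k hk⟩
  have hU1 : μ (⋃ N, F N) = 1 := by
    rw [← prob_compl_eq_zero_iff (MeasurableSet.iUnion hFmeas)]
    rw [ae_iff] at hsubU
    exact hsubU
  have htendF : Tendsto (fun N => μ (F N)) atTop (nhds (μ (⋃ N, F N))) :=
    tendsto_measure_iUnion_atTop hFmono
  rw [hU1] at htendF
  exact tendsto_of_tendsto_of_tendsto_of_le_of_le htendF tendsto_const_nhds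
    (fun N => measure_mono (hFE N)) (fun N => prob_le_one)
end
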